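/- For the variable-step BDF2 kernels with r₁ = 0, the DOC kernels admit the explicit product formula θ^{(n)}_{n-j} = (1/b^{(j)}_0) ∏_{i=j+1}^n (r_i²/(1+2r_i)) for 1 ≤ j ≤ n, where b^{(j)}_0 = (1+2r_j)/(τ_j(1+r_j)). -/

import Mathlib

open Finset

/-- Explicit product formula for the DOC kernels of the variable-step BDF2
method: `θ^{(n)}_{n-j} = (1/b^{(j)}_0) ∏_{i=j+1}^n r_i²/(1+2r_i)`. -/
theorem bdf2_doc_product_formula (N : ℕ)
    (τ r : ℕ → ℝ) (hτ : ∀ k, 1 ≤ k → k ≤ N → 0 < τ k) (hr1 : r 1 = 0)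
    (hr : ∀ k, 2 ≤ k → k ≤ N → 0 < r k ∧ τ k = r k * τ (k - 1))
    (b θ : ℕ → ℕ → ℝ)
    (hb0 : ∀ n, 1 ≤ n → n ≤ N → b n n = (1 + 2 * r n) / (τ n * (1 + r n)))
    (hb1 : ∀ n, 2 ≤ n → n ≤ N → b n (n - 1) = -(r n ^ 2) / (τ n * (1 + r n)))
    (hb2 : ∀ n j, n ≤ N → 1 ≤ j → j + 2 ≤ n → b n j = 0)
    (hdoc : ∀ k n, 1 ≤ k → k ≤ n → n ≤ N →
      ∑ j ∈ Icc k n, θ n j * b j k = if n = k then 1 else 0) :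
    ∀ j n, 1 ≤ j → j ≤ n → n ≤ N →
      θ n j = (1 / b j j) * ∏ i ∈ Icc (j + 1) n, r i ^ 2 / (1 + 2 * r i) := by
  have hrpos : ∀ k, 1 ≤ k → k ≤ N → 0 ≤ r k := by
    intro k hk1 hkN
    rcases eq_or_lt_of_le hk1 with h | h
    · rw [← h, hr1]
    · exact le_of_lt (hr k h hkN).1
  have hbbpos : ∀ k, 1 ≤ k → k ≤ N → 0 < b k k := by
    intro k hk1 hkN
    rw [hb0 k hk1 hkN]
    have h1 := hτ k hk1 hkN
    have h2 := hrpos k hk1 hkN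
    positivity
  intro j n hj hjn hnN
  -- downward induction on distance from n
  have key : ∀ d j, 1 ≤ j → j + d = n →
      θ n j = (1 / b j j) * ∏ i ∈ Icc (j + 1) n, r i ^ 2 / (1 + 2 * r i) := by
    intro d
    induction d with
    | zero =>
      intro j hj1 hjd
      have hjn' : j = n := by omega
      subst hjn'
      have h := hdoc j j hj1 le_rfl hnN
      simp only [Finset.Icc_self, Finset.sum_singleton, if_pos rfl, if_true] at h
      rw [Finset.Icc_eq_empty (by omega), Finset.prod_empty, mul_one]
      have hb := hbbpos j hj1 hnN
      field_simp
      linarith [h]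
    | succ d ih =>
      intro j hj1 hjd
      have hjN : j ≤ N := by omega
      have hj1N : j + 1 ≤ N := by omega
      have h := hdoc j n hj1 (by omega) hnN
      rw [if_neg (by omega)] at h
      have hsub : ∑ x ∈ Icc j n, θ n x * b x j = ∑ x ∈ Icc j (j+1), θ n x * b x j := by
        symm
        apply Finset.sum_subset (Finset.Icc_subset_Icc_right (by omega))
        intro x hx hx'
        simp only [Finset.mem_Icc] at hx hx'
        rw [hb2 x j (by omega) hj1 (by omega), mul_zero]
      rw [hsub] at h
      rw [show j + 1 = j + 1 from rfl, Finset.sum_Icc_succ_top (by omega),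
        Finset.Icc_self, Finset.sum_singleton] at h
      -- h : θ n j * b j j + θ n (j+1) * b (j+1) j = 0
      have hih := ih (j+1) (by omega) (by omega)
      have hb1' : b (j+1) j = -(r (j+1) ^ 2) / (τ (j+1) * (1 + r (j+1))) := by
        have := hb1 (j+1) (by omega) hj1N
        simpa using this
      have hprodsplit : ∏ i ∈ Icc (j + 1) n, r i ^ 2 / (1 + 2 * r i)
          = (r (j+1) ^ 2 / (1 + 2 * r (j+1))) *
            ∏ i ∈ Icc (j + 2) n, r i ^ 2 / (1 + 2 * r i) := by
        have hins : Icc (j + 1) n = insert (j+1) (Icc (j + 2) n) := by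
          ext x
          simp only [Finset.mem_Icc, Finset.mem_insert]
          omega
        rw [hins, Finset.prod_insert (by simp [Finset.mem_Icc])]
      rw [hprodsplit]
      rw [hih, show j+1+1 = j+2 from rfl] at h
      rw [hb0 j hj1 hjN] at h ⊢
      rw [hb0 (j+1) (by omega) hj1N, hb1'] at h
      have hτj := hτ j hj1 hjN
      have hτj1 := hτ (j+1) (by omega) hj1N
      have hrj := hrpos j hj1 hjN
      have hrj1 := hrpos (j+1) (by omega) hj1N
      have h1 : τ j ≠ 0 := ne_of_gt hτj
      have h2 : τ (j+1) ≠ 0 := ne_of_gt hτj1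
      have h3 : (1 : ℝ) + r j ≠ 0 := by positivity
      have h4 : (1 : ℝ) + r (j+1) ≠ 0 := by positivity
      have h5 : (1 : ℝ) + 2 * r j ≠ 0 := by positivity
      have h6 : (1 : ℝ) + 2 * r (j+1) ≠ 0 := by positivity
      set P := ∏ i ∈ Icc (j + 2) n, r i ^ 2 / (1 + 2 * r i) with hP
      have hA : ((1 + 2 * r j) / (τ j * (1 + r j))) ≠ 0 := by positivity
      have h' : θ n j = (1 / ((1 + 2 * r (j+1)) / (τ (j+1) * (1 + r (j+1)))) * P
          * (r (j+1) ^ 2 / (τ (j+1) * (1 + r (j+1)))))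
          / ((1 + 2 * r j) / (τ j * (1 + r j))) := by
        rw [eq_div_iff hA]
        linear_combination h
      rw [h']
      field_simp
  exact key (n - j) j hj (by omega)
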